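/- arXiv:1505.02414 — 2 statements merged into one kernel-verified Lean document; each statement's English description precedes it below -/
import Mathlib

section
/- Consider the modified homogeneous game Γ(S,η) where s > 1 agents each choose a precision in {0} ∪ [η, 1/σ²] with cost J_i(λ) = c(λᵢ) + F(1/Σⱼλⱼ) (+∞ if all zero). Let λ*(s) be the symmetric equilibrium of the unrestricted game and η*(s) the unique solution of F(1/((s−1)η)) − F(1/(sη)) = c(η) (or 1/σ² if no solution). If λ*(s) < η ≤ η*(s), then the symmetric profile with λᵢ = η for all i is a Nash equilibrium: no agent gains by deviating to 0 or to any λ ∈ (η, 1/σ²]. -/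
open Set

/-- Cost of agent `i` in the estimation game (estimation cost `+∞` when `Σⱼλⱼ = 0`). -/
noncomputable def gameCost (s : ℕ) (c F : ℝ → ℝ) (i : Fin s) (lam : Fin s → ℝ) : EReal :=
  (c (lam i) : EReal) + (if 0 < ∑ j, lam j then ((F (1 / ∑ j, lam j) : ℝ) : EReal) else ⊤)

/-- For a convex monotone function, the increment over a shorter, more-leftward interval
is at most the increment over a longer, more-rightward interval. -/
lemma convex_mono_diff_le {S : Set ℝ} {f : ℝ → ℝ} (hf : ConvexOn ℝ S f)
    (hm : MonotoneOn f S) {x y x' y' : ℝ} (hx : x ∈ S) (hy : y ∈ S) (hx' : x' ∈ S)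
    (hy' : y' ∈ S) (hxy : x < y) (hx'y' : x' < y') (hxx' : x ≤ x') (hyy' : y ≤ y')
    (hlen : y - x ≤ y' - x') : f y - f x ≤ f y' - f x' := by
  have h1 : (f y - f x) / (y - x) ≤ (f y' - f x) / (y' - x) :=
    hf.secant_mono hx hy hy' hxy.ne' (hxy.trans_le hyy').ne' hyy'
  have h2 : (f x - f y') / (x - y') ≤ (f x' - f y') / (x' - y') :=
    hf.secant_mono hy' hx hx' (hxx'.trans_lt hx'y').ne (hx'y'.ne) hxx'
  have e3 : (f x - f y') / (x - y') = (f y' - f x) / (y' - x) := by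
    rw [← neg_div_neg_eq]; ring_nf
  have e4 : (f x' - f y') / (x' - y') = (f y' - f x') / (y' - x') := by
    rw [← neg_div_neg_eq]; ring_nf
  rw [e3, e4] at h2
  have hs1 : 0 ≤ (f y - f x) / (y - x) :=
    div_nonneg (sub_nonneg.mpr (hm hx hy hxy.le)) (sub_nonneg.mpr hxy.le)
  have h12 : (f y - f x) / (y - x) ≤ (f y' - f x') / (y' - x') := h1.trans h2
  have e1 : f y - f x = (f y - f x) / (y - x) * (y - x) :=
    (div_mul_cancel₀ _ (sub_ne_zero.mpr hxy.ne')).symm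
  have e2 : f y' - f x' = (f y' - f x') / (y' - x') * (y' - x') :=
    (div_mul_cancel₀ _ (sub_ne_zero.mpr hx'y'.ne')).symm
  calc f y - f x = (f y - f x) / (y - x) * (y - x) := e1
    _ ≤ (f y' - f x') / (y' - x') * (y' - x') :=
        mul_le_mul h12 hlen (by linarith) (hs1.trans h12)
    _ = f y' - f x' := e2.symm

lemma gameCost_eq_coe (s : ℕ) (c F : ℝ → ℝ) (i : Fin s) (lam : Fin s → ℝ)
    (h : 0 < ∑ j, lam j) :
    gameCost s c F i lam = ((c (lam i) + F (1 / ∑ j, lam j) : ℝ) : EReal) := by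
  rw [gameCost, if_pos h, EReal.coe_add]

set_option maxHeartbeats 1000000 in
/-- in the modified homogeneous game `Γ(S,η)` with `s > 1` agents whose
strategy set is `{0} ∪ [η, 1/σ²]`, if `λ*(s) < η ≤ η*(s)` — where `λ*(s)` is the
symmetric equilibrium value of the unrestricted game and `η*(s)` is the unique solution
of `F(1/((s−1)η)) − F(1/(sη)) = c(η)` (or `1/σ²` if there is no solution) — then the
symmetric profile with `λᵢ = η` for all `i` is a Nash equilibrium: no agent gains by
deviating to `0` or to any `λ ∈ (η, 1/σ²]`. -/
theorem min_precision_symmetric_NE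
    (σ2 : ℝ) (hσ2 : 0 < σ2) (s : ℕ) (hs : 1 < s) (c F : ℝ → ℝ)
    (hc_smooth : ContDiffOn ℝ 2 c (Icc 0 (1 / σ2)))
    (hc_nonneg : ∀ x ∈ Icc 0 (1 / σ2), 0 ≤ c x)
    (hc_mono : MonotoneOn c (Icc 0 (1 / σ2)))
    (hc_sconv : StrictConvexOn ℝ (Icc 0 (1 / σ2)) c)
    (hc0 : c 0 = 0) (hc'0 : deriv c 0 = 0)
    (hF_smooth : ContDiffOn ℝ 2 F (Ioi 0))
    (hF_nonneg : ∀ x ∈ Ioi 0, 0 ≤ F x)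
    (hF_mono : MonotoneOn F (Ioi 0))
    (hF_sconv : StrictConvexOn ℝ (Ioi 0) F)
    -- `λ*(s)`: symmetric Nash equilibrium value of the unrestricted game
    (lamstar : ℝ) (hlamstar_mem : lamstar ∈ Icc 0 (1 / σ2))
    (hlamstar_NE : ∀ i : Fin s, ∀ μ ∈ Icc 0 (1 / σ2),
      gameCost s c F i (fun _ => lamstar)
        ≤ gameCost s c F i (Function.update (fun _ => lamstar) i μ))
    -- `η*(s)`: unique solution of the indifference equation, or `1/σ²` if none exists
    (etastar : ℝ) (hetastar_mem : etastar ∈ Ioc 0 (1 / σ2))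
    (hetastar : F (1 / (((s : ℝ) - 1) * etastar)) - F (1 / ((s : ℝ) * etastar)) = c etastar
      ∨ (etastar = 1 / σ2 ∧ ∀ η ∈ Ioc 0 (1 / σ2),
          F (1 / (((s : ℝ) - 1) * η)) - F (1 / ((s : ℝ) * η)) ≠ c η))
    (η : ℝ) (hη : lamstar < η) (hη' : η ≤ etastar) :
    ∀ i : Fin s, ∀ μ ∈ ({0} : Set ℝ) ∪ Icc η (1 / σ2),
      gameCost s c F i (fun _ => η)
        ≤ gameCost s c F i (Function.update (fun _ => η) i μ) := by
  have hsR : (1 : ℝ) < (s : ℝ) := by exact_mod_cast hs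
  have hs1 : (0 : ℝ) < (s : ℝ) - 1 := by linarith
  have hs0 : (0 : ℝ) < (s : ℝ) := by linarith
  have hσ2' : 0 < 1 / σ2 := by positivity
  -- sum lemmas
  have sum_const : ∀ a : ℝ, (∑ _j : Fin s, a) = (s : ℝ) * a := by
    intro a; simp [Finset.sum_const, mul_comm]
  have sum_update : ∀ (i : Fin s) (a b : ℝ),
      (∑ j, Function.update (fun _ : Fin s => a) i b j) = b + ((s : ℝ) - 1) * a := by
    intro i a b
    rw [Finset.sum_update_of_mem (Finset.mem_univ i), Finset.sum_const, ← Finset.erase_eq,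
      Finset.card_erase_of_mem (Finset.mem_univ i), Finset.card_univ, Fintype.card_fin,
      nsmul_eq_mul, Nat.cast_sub hs.le, Nat.cast_one]
  -- lamstar is positive
  have hlam_pos : 0 < lamstar := by
    rcases hlamstar_mem.1.lt_or_eq with h | h
    · exact h
    · exfalso
      have i : Fin s := ⟨0, by omega⟩
      have hNE := hlamstar_NE i (1 / σ2) ⟨hσ2'.le, le_refl _⟩
      have hsum1 : (∑ j, Function.update (fun _ : Fin s => lamstar) i (1 / σ2) j)
          = 1 / σ2 + ((s : ℝ) - 1) * lamstar := sum_update i lamstar (1 / σ2)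
      have hpos : 0 < ∑ j, Function.update (fun _ : Fin s => lamstar) i (1 / σ2) j := by
        rw [hsum1, ← h]; simpa using hσ2'
      rw [gameCost_eq_coe s c F i _ hpos] at hNE
      have hsum0 : (∑ _j : Fin s, lamstar) = 0 := by rw [sum_const, ← h, mul_zero]
      rw [gameCost] at hNE
      rw [if_neg (by rw [hsum0]; exact lt_irrefl 0)] at hNE
      rw [EReal.coe_add_top] at hNE
      exact EReal.coe_ne_top _ (top_le_iff.mp hNE)
  have hη0 : 0 < η := hlam_pos.trans hη
  have hησ : η ≤ 1 / σ2 := hη'.trans hetastar_mem.2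
  -- Fact A : deviation of the unrestricted equilibrium to 0
  have factA : c lamstar + F (1 / ((s : ℝ) * lamstar))
      ≤ F (1 / (((s : ℝ) - 1) * lamstar)) := by
    have i : Fin s := ⟨0, by omega⟩
    have hNE := hlamstar_NE i 0 ⟨le_refl _, hσ2'.le⟩
    have hpos1 : 0 < ∑ _j : Fin s, lamstar := by
      rw [sum_const]; positivity
    have hpos2 : 0 < ∑ j, Function.update (fun _ : Fin s => lamstar) i 0 j := by
      rw [sum_update]; nlinarith
    rw [gameCost_eq_coe s c F i _ hpos1, gameCost_eq_coe s c F i _ hpos2,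
      EReal.coe_le_coe_iff] at hNE
    rw [sum_const, sum_update, Function.update_self] at hNE
    rw [hc0, zero_add, zero_add] at hNE
    exact hNE
  -- Fact B : deviation of the unrestricted equilibrium to μ'
  have factB : ∀ μ' ∈ Icc (0 : ℝ) (1 / σ2), c lamstar + F (1 / ((s : ℝ) * lamstar))
      ≤ c μ' + F (1 / ((s : ℝ) * lamstar + (μ' - lamstar))) := by
    intro μ' hμ'
    have i : Fin s := ⟨0, by omega⟩
    have hNE := hlamstar_NE i μ' hμ'
    have hpos1 : 0 < ∑ _j : Fin s, lamstar := by rw [sum_const]; positivity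
    have hpos2 : 0 < ∑ j, Function.update (fun _ : Fin s => lamstar) i μ' j := by
      rw [sum_update]; nlinarith [hμ'.1]
    rw [gameCost_eq_coe s c F i _ hpos1, gameCost_eq_coe s c F i _ hpos2,
      EReal.coe_le_coe_iff] at hNE
    rw [sum_const, sum_update, Function.update_self] at hNE
    have e : μ' + ((s : ℝ) - 1) * lamstar = (s : ℝ) * lamstar + (μ' - lamstar) := by ring
    rw [e] at hNE
    exact hNE
  -- the key inequality for deviation to 0
  have gkey : c η + F (1 / ((s : ℝ) * η)) ≤ F (1 / (((s : ℝ) - 1) * η)) := by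
    rcases hetastar with heq | ⟨he, hnone⟩
    · -- etastar solves the indifference equation; use monotonicity of the gap
      rcases hη'.lt_or_eq with hlt | hEq
      · have hF_diff : F (1 / (((s : ℝ) - 1) * etastar)) - F (1 / ((s : ℝ) * etastar))
            ≤ F (1 / (((s : ℝ) - 1) * η)) - F (1 / ((s : ℝ) * η)) := by
          have he0 : 0 < etastar := hetastar_mem.1
          apply convex_mono_diff_le hF_sconv.convexOn hF_mono
          · exact mem_Ioi.mpr (one_div_pos.mpr (mul_pos hs0 he0))
          · exact mem_Ioi.mpr (one_div_pos.mpr (mul_pos hs1 he0))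
          · exact mem_Ioi.mpr (one_div_pos.mpr (mul_pos hs0 hη0))
          · exact mem_Ioi.mpr (one_div_pos.mpr (mul_pos hs1 hη0))
          · apply one_div_lt_one_div_of_lt (mul_pos hs1 he0); nlinarith
          · apply one_div_lt_one_div_of_lt (mul_pos hs1 hη0); nlinarith
          · apply one_div_le_one_div_of_le (mul_pos hs0 hη0); nlinarith
          · apply one_div_le_one_div_of_le (mul_pos hs1 hη0); nlinarith
          · have e1 : 1 / (((s : ℝ) - 1) * etastar) - 1 / ((s : ℝ) * etastar)
                = 1 / ((s : ℝ) * ((s : ℝ) - 1) * etastar) := by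
              field_simp
              ring
            have e2 : 1 / (((s : ℝ) - 1) * η) - 1 / ((s : ℝ) * η)
                = 1 / ((s : ℝ) * ((s : ℝ) - 1) * η) := by
              field_simp
              ring
            rw [e1, e2]
            apply one_div_le_one_div_of_le (mul_pos (mul_pos hs0 hs1) hη0)
            nlinarith [mul_nonneg (mul_pos hs0 hs1).le (sub_nonneg.mpr hη')]
        have hc_le : c η ≤ c etastar :=
          hc_mono ⟨hη0.le, hησ⟩ ⟨hetastar_mem.1.le, hetastar_mem.2⟩ hlt.le
        linarith
      · rw [hEq]; linarith [heq]
    · -- no solution exists: IVT argument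
      by_contra hcon
      push_neg at hcon
      -- g(lamstar) > 0 (it is ≥ 0 by factA, and ≠ 0 by hnone)
      have hlam_mem : lamstar ∈ Ioc (0 : ℝ) (1 / σ2) := ⟨hlam_pos, hlamstar_mem.2⟩
      have hglam : 0 < F (1 / (((s : ℝ) - 1) * lamstar)) - F (1 / ((s : ℝ) * lamstar))
          - c lamstar := by
        rcases (sub_nonneg.mpr factA).lt_or_eq with h | h
        · linarith
        · exact absurd (by linarith : F (1 / (((s : ℝ) - 1) * lamstar))
            - F (1 / ((s : ℝ) * lamstar)) = c lamstar) (hnone lamstar hlam_mem)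
      have hgη : F (1 / (((s : ℝ) - 1) * η)) - F (1 / ((s : ℝ) * η)) - c η < 0 := by
        linarith
      -- continuity of g on [lamstar, η]
      set g : ℝ → ℝ :=
        fun t => F (1 / (((s : ℝ) - 1) * t)) - F (1 / ((s : ℝ) * t)) - c t with hg
      have hsub : Icc lamstar η ⊆ Ioc (0 : ℝ) (1 / σ2) := fun t ht =>
        ⟨hlam_pos.trans_le ht.1, ht.2.trans hησ⟩
      have hFcomp : ∀ k : ℝ, 0 < k → ContinuousOn (fun t : ℝ => F (1 / (k * t)))
          (Icc lamstar η) := by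
        intro k hk
        apply hF_smooth.continuousOn.comp
        · apply ContinuousOn.div continuousOn_const
            (continuous_const.mul continuous_id).continuousOn
          intro t ht
          have : 0 < t := hlam_pos.trans_le ht.1
          exact mul_ne_zero hk.ne' this.ne'
        · intro t ht
          have : 0 < t := hlam_pos.trans_le ht.1
          exact mem_Ioi.mpr (by positivity)
      have hgcont : ContinuousOn g (Icc lamstar η) := by
        apply ContinuousOn.sub
        apply ContinuousOn.sub
        · exact hFcomp ((s : ℝ) - 1) (by linarith)
        · exact hFcomp (s : ℝ) (by linarith)
        · exact hc_smooth.continuousOn.mono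
            (Icc_subset_Icc hlam_pos.le (hησ) : Icc lamstar η ⊆ Icc 0 (1 / σ2))
      have h0mem : (0 : ℝ) ∈ Icc (g η) (g lamstar) := ⟨hgη.le, hglam.le⟩
      obtain ⟨t, ht, hgt⟩ := intermediate_value_Icc' hη.le hgcont h0mem
      exact hnone t (hsub ht) (by simpa [hg, sub_eq_zero] using
        (sub_eq_zero.mp (by linarith [hgt] : g t - 0 = 0)))
  -- main goal
  intro i μ hμ
  have hpos1 : 0 < ∑ _j : Fin s, η := by rw [sum_const]; positivity
  rcases hμ with h0 | hmem
  · -- deviation to 0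
    have hμ0 : μ = 0 := h0
    subst hμ0
    have hpos2 : 0 < ∑ j, Function.update (fun _ : Fin s => η) i 0 j := by
      rw [sum_update]; nlinarith
    rw [gameCost_eq_coe s c F i _ hpos1, gameCost_eq_coe s c F i _ hpos2,
      EReal.coe_le_coe_iff]
    rw [sum_const, sum_update, Function.update_self, hc0, zero_add, zero_add]
    exact gkey
  · -- deviation to μ ∈ [η, 1/σ²]
    rcases hmem.1.eq_or_lt with hEq | hlt
    · rw [← hEq]
      have : Function.update (fun _ : Fin s => η) i η = fun _ : Fin s => η :=
        Function.update_eq_self i _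
      rw [this]
    · have hpos2 : 0 < ∑ j, Function.update (fun _ : Fin s => η) i μ j := by
        rw [sum_update]; nlinarith
      rw [gameCost_eq_coe s c F i _ hpos1, gameCost_eq_coe s c F i _ hpos2,
        EReal.coe_le_coe_iff]
      rw [sum_const, sum_update, Function.update_self]
      set δ : ℝ := μ - η with hδ
      have hδpos : 0 < δ := by rw [hδ]; linarith
      set μ' : ℝ := lamstar + δ with hμ'
      have hμ'mem : μ' ∈ Icc (0 : ℝ) (1 / σ2) :=
        ⟨by rw [hμ', hδ]; linarith, by rw [hμ', hδ]; linarith [hmem.2]⟩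
      have hB := factB μ' hμ'mem
      -- c-slope comparison
      have hclope : c μ' - c lamstar ≤ c μ - c η := by
        apply convex_mono_diff_le hc_sconv.convexOn hc_mono hlamstar_mem
          ⟨by nlinarith, hμ'mem.2⟩ ⟨hη0.le, hησ⟩ ⟨by linarith, hmem.2⟩
        · rw [hμ']; linarith
        · exact hlt
        · exact hη.le
        · rw [hμ', hδ]; linarith
        · rw [hμ', hδ]; linarith
      -- F-slope comparison
      have hFslope : F (1 / ((s : ℝ) * η)) - F (1 / ((s : ℝ) * η + δ))
          ≤ F (1 / ((s : ℝ) * lamstar)) - F (1 / ((s : ℝ) * lamstar + δ)) := by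
        apply convex_mono_diff_le hF_sconv.convexOn hF_mono
        · exact mem_Ioi.mpr (one_div_pos.mpr (by nlinarith))
        · exact mem_Ioi.mpr (one_div_pos.mpr (mul_pos hs0 hη0))
        · exact mem_Ioi.mpr (one_div_pos.mpr (by nlinarith))
        · exact mem_Ioi.mpr (one_div_pos.mpr (mul_pos hs0 hlam_pos))
        · apply one_div_lt_one_div_of_lt (mul_pos hs0 hη0); nlinarith
        · apply one_div_lt_one_div_of_lt (mul_pos hs0 hlam_pos); nlinarith
        · apply one_div_le_one_div_of_le (by nlinarith : (0:ℝ) < (s : ℝ) * lamstar + δ)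
          nlinarith
        · apply one_div_le_one_div_of_le (mul_pos hs0 hlam_pos); nlinarith
        · have hslam : (0 : ℝ) < (s : ℝ) * lamstar := mul_pos hs0 hlam_pos
          have hseta : (0 : ℝ) < (s : ℝ) * η := mul_pos hs0 hη0
          have e1 : 1 / ((s : ℝ) * η) - 1 / ((s : ℝ) * η + δ)
              = δ / (((s : ℝ) * η) * ((s : ℝ) * η + δ)) := by
            rw [div_sub_div _ _ (by linarith) (by linarith)]
            congr 1
            ring
          have e2 : 1 / ((s : ℝ) * lamstar) - 1 / ((s : ℝ) * lamstar + δ)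
              = δ / (((s : ℝ) * lamstar) * ((s : ℝ) * lamstar + δ)) := by
            rw [div_sub_div _ _ (by linarith) (by linarith)]
            congr 1
            ring
          rw [e1, e2]
          have hd1 : (0 : ℝ) < (s : ℝ) * lamstar * ((s : ℝ) * lamstar + δ) :=
            mul_pos hslam (by linarith)
          apply div_le_div_of_nonneg_left hδpos.le hd1
          have h1 : (s : ℝ) * lamstar ≤ (s : ℝ) * η := by nlinarith
          exact mul_le_mul h1 (by linarith) (by linarith) (by linarith)
      have eB : (s : ℝ) * lamstar + (μ' - lamstar) = (s : ℝ) * lamstar + δ := by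
        rw [hμ']; ring
      rw [eB] at hB
      have eG : μ + ((s : ℝ) - 1) * η = (s : ℝ) * η + δ := by rw [hδ]; ring
      rw [eG]
      linarith
end

section
/- In the homogeneous game, if λ*(s) < 1/σ² then λ*(s) < η*(s), where λ*(s) is the symmetric Nash equilibrium precision (unique minimizer of the potential) and η*(s) solves c(η) = F(1/((s−1)η)) − F(1/(sη)). Equivalently, c(λ*(s)) < F(1/((s−1)λ*(s))) − F(1/(sλ*(s))). Hence imposing the minimum precision level η*(s) strictly improves the estimation variance: 1/(s η*(s)) < 1/(s λ*(s)). -/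
open Set

lemma aux_conv {T B : ℝ} (hT : 0 < T) (F : ℝ → ℝ)
    (hF_mono : MonotoneOn F (Ioi 0)) (hF_conv : ConvexOn ℝ (Ioi 0) F) :
    ConvexOn ℝ (Icc 0 B) (fun μ => F (1 / (T + μ))) := by
  refine ⟨convex_Icc 0 B, fun x hx y hy a b ha hb hab => ?_⟩
  have hx0 : 0 < T + x := by have := hx.1; linarith
  have hy0 : 0 < T + y := by have := hy.1; linarith
  have hz0 : 0 < T + (a • x + b • y) := by
    have h1 : 0 ≤ a • x := mul_nonneg ha hx.1
    have h2 : 0 ≤ b • y := mul_nonneg hb hy.1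
    simp only [smul_eq_mul] at *; linarith
  have hinvx : (1 : ℝ) / (T + x) ∈ Ioi (0:ℝ) := mem_Ioi.2 (by positivity)
  have hinvy : (1 : ℝ) / (T + y) ∈ Ioi (0:ℝ) := mem_Ioi.2 (by positivity)
  have hcomb : a • (1 / (T + x)) + b • (1 / (T + y)) ∈ Ioi (0:ℝ) :=
    (convex_Ioi (0:ℝ)) hinvx hinvy ha hb hab
  have hinv := (convexOn_zpow (-1 : ℤ) (𝕜 := ℝ)).2 (mem_Ioi.2 hx0) (mem_Ioi.2 hy0) ha hb hab
  simp only [zpow_neg, zpow_one, smul_eq_mul] at hinv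
  have heq : a * (T + x) + b * (T + y) = T + (a * x + b * y) := by
    have : a * T + b * T = T := by rw [← add_mul, hab, one_mul]
    ring_nf; linarith [this]
  rw [heq] at hinv
  have step1 : 1 / (T + (a • x + b • y)) ≤ a • (1 / (T + x)) + b • (1 / (T + y)) := by
    simpa [one_div, smul_eq_mul] using hinv
  have step2 := hF_mono (mem_Ioi.2 (by positivity)) hcomb step1
  have step3 := hF_conv.2 hinvx hinvy ha hb hab
  simp only [smul_eq_mul] at *
  linarith

lemma aux_diff_mono (a b : ℝ) (ha : 0 < a) (hab : a < b) (F : ℝ → ℝ)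
    (hF_mono : MonotoneOn F (Ioi 0)) (hF_conv : ConvexOn ℝ (Ioi 0) F)
    {p q : ℝ} (hp : 0 < p) (hpq : p < q) :
    F (1 / (a * q)) - F (1 / (b * q)) ≤ F (1 / (a * p)) - F (1 / (b * p)) := by
  have hq : 0 < q := hp.trans hpq
  have hb : 0 < b := ha.trans hab
  set x1 := 1 / (a * p) with hx1
  set x2 := 1 / (a * q) with hx2
  set y1 := 1 / (b * p) with hy1
  set y2 := 1 / (b * q) with hy2
  have hx1p : 0 < x1 := by positivity
  have hx2p : 0 < x2 := by positivity
  have hy1p : 0 < y1 := by positivity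
  have hy2p : 0 < y2 := by positivity
  have h21 : x2 < x1 := by
    rw [hx1, hx2, div_lt_div_iff₀ (by positivity) (by positivity)]
    nlinarith
  have hy21 : y2 < y1 := by
    rw [hy1, hy2, div_lt_div_iff₀ (by positivity) (by positivity)]
    nlinarith
  have hy2x2 : y2 < x2 := by
    rw [hy2, hx2, div_lt_div_iff₀ (by positivity) (by positivity)]
    nlinarith
  have hy1x1 : y1 < x1 := by
    rw [hy1, hx1, div_lt_div_iff₀ (by positivity) (by positivity)]
    nlinarith
  have hgap : y1 - y2 ≤ x1 - x2 := by
    have e1 : x1 - x2 = (q - p) / (a * p * q) := by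
      rw [hx1, hx2]; field_simp
    have e2 : y1 - y2 = (q - p) / (b * p * q) := by
      rw [hy1, hy2]; field_simp
    rw [e1, e2, div_le_div_iff₀ (by positivity) (by positivity)]
    nlinarith [mul_nonneg (mul_nonneg (sub_nonneg.2 hpq.le) (mul_pos hp hq).le)
      (sub_nonneg.2 hab.le)]
  have s1 := hF_conv.secant_mono (mem_Ioi.2 hy2p) (mem_Ioi.2 hy1p) (mem_Ioi.2 hx1p)
    hy21.ne' (hy2x2.trans h21).ne' hy1x1.le
  have s2 := hF_conv.secant_mono (mem_Ioi.2 hx1p) (mem_Ioi.2 hy2p) (mem_Ioi.2 hx2p)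
    (hy2x2.trans h21).ne h21.ne hy2x2.le
  have e3 : (F y2 - F x1) / (y2 - x1) = (F x1 - F y2) / (x1 - y2) := by
    rw [← neg_div_neg_eq]; ring_nf
  have e4 : (F x2 - F x1) / (x2 - x1) = (F x1 - F x2) / (x1 - x2) := by
    rw [← neg_div_neg_eq]; ring_nf
  rw [e3, e4] at s2
  have S1 := (s1.trans s2)
  have hS1nn : 0 ≤ (F y1 - F y2) / (y1 - y2) := by
    have := hF_mono (mem_Ioi.2 hy2p) (mem_Ioi.2 hy1p) hy21.le
    apply div_nonneg <;> linarith
  rw [div_le_div_iff₀ (by linarith) (by linarith)] at S1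
  rw [le_div_iff₀ (by linarith)] at hS1nn
  nlinarith [hgap, hy21]

/-- in the homogeneous game with `s > 1` agents, if the symmetric Nash
equilibrium precision `λ*(s)` satisfies `λ*(s) < 1/σ²`, then
`c(λ*(s)) < F(1/((s−1)λ*(s))) − F(1/(sλ*(s)))`, hence `λ*(s) < η*(s)` where `η*(s)`
solves `c(η) = F(1/((s−1)η)) − F(1/(sη))`, and therefore imposing the minimum precision
level `η*(s)` strictly improves the estimation variance: `1/(sη*(s)) < 1/(sλ*(s))`. -/
theorem min_precision_strictly_improves_variance
    (σ2 : ℝ) (hσ2 : 0 < σ2) (s : ℕ) (hs : 1 < s) (c F : ℝ → ℝ)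
    (hc_smooth : ContDiffOn ℝ 2 c (Icc 0 (1 / σ2)))
    (hc_nonneg : ∀ x ∈ Icc 0 (1 / σ2), 0 ≤ c x)
    (hc_mono : MonotoneOn c (Icc 0 (1 / σ2)))
    (hc_sconv : StrictConvexOn ℝ (Icc 0 (1 / σ2)) c)
    (hc0 : c 0 = 0) (hc'0 : deriv c 0 = 0)
    (hF_smooth : ContDiffOn ℝ 2 F (Ioi 0))
    (hF_nonneg : ∀ x ∈ Ioi 0, 0 ≤ F x)
    (hF_mono : MonotoneOn F (Ioi 0))
    (hF_sconv : StrictConvexOn ℝ (Ioi 0) F)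
    -- `λ*(s)`: the (positive) symmetric Nash equilibrium value of the unrestricted game,
    -- which is the unique minimizer of the potential
    (lamstar : ℝ) (hlamstar_pos : 0 < lamstar) (hlamstar_lt : lamstar < 1 / σ2)
    (hlamstar_NE : ∀ i : Fin s, ∀ μ ∈ Icc 0 (1 / σ2),
      gameCost s c F i (fun _ => lamstar)
        ≤ gameCost s c F i (Function.update (fun _ => lamstar) i μ))
    (hlamstar_unique : ∀ lam' : Fin s → ℝ, (∀ i, lam' i ∈ Icc 0 (1 / σ2)) →
      (∀ i : Fin s, ∀ μ ∈ Icc 0 (1 / σ2),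
        gameCost s c F i lam' ≤ gameCost s c F i (Function.update lam' i μ)) →
      lam' = fun _ => lamstar)
    -- `η*(s)`: the solution of the indifference equation
    (etastar : ℝ) (hetastar_mem : etastar ∈ Ioc 0 (1 / σ2))
    (hetastar : c etastar
      = F (1 / (((s : ℝ) - 1) * etastar)) - F (1 / ((s : ℝ) * etastar))) :
    c lamstar < F (1 / (((s : ℝ) - 1) * lamstar)) - F (1 / ((s : ℝ) * lamstar)) ∧
    lamstar < etastar ∧
    1 / ((s : ℝ) * etastar) < 1 / ((s : ℝ) * lamstar) := by
  have hs1 : (1 : ℝ) ≤ (s : ℝ) - 1 := by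
    have : (2 : ℝ) ≤ (s : ℝ) := by exact_mod_cast hs
    linarith
  set B := 1 / σ2 with hB
  have hBpos : 0 < B := by positivity
  obtain ⟨T, hT⟩ : ∃ T : ℝ, T = ((s : ℝ) - 1) * lamstar := ⟨_, rfl⟩
  have hTpos : 0 < T := by rw [hT]; nlinarith
  obtain ⟨g, hgdef⟩ : ∃ g : ℝ → ℝ, g = fun μ => c μ + F (1 / (T + μ)) := ⟨_, rfl⟩
  -- the Nash condition for agent i gives coordinatewise minimality of g at lamstar
  have hkey : ∀ μ ∈ Icc 0 B, g lamstar ≤ g μ := by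
    intro μ hμ
    have i : Fin s := ⟨0, by omega⟩
    have hNE := hlamstar_NE i μ hμ
    have hsum1 : ∑ j : Fin s, (fun _ : Fin s => lamstar) j = T + lamstar := by
      rw [Finset.sum_const, Finset.card_univ, Fintype.card_fin, nsmul_eq_mul, hT]; ring
    have hsum2 : ∑ j, Function.update (fun _ : Fin s => lamstar) i μ j = T + μ := by
      rw [Finset.sum_update_of_mem (Finset.mem_univ i)]
      have hcard : (Finset.univ \ {i}).card = s - 1 := by
        rw [Finset.sdiff_singleton_eq_erase, Finset.card_erase_of_mem (Finset.mem_univ i),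
          Finset.card_univ, Fintype.card_fin]
      rw [Finset.sum_const, hcard, nsmul_eq_mul]
      have hc1 : ((s - 1 : ℕ) : ℝ) = (s : ℝ) - 1 := by
        have : 1 ≤ s := hs.le
        push_cast [this]; ring
      rw [hc1, hT]; ring
    have hpos1 : 0 < T + lamstar := by linarith
    have hpos2 : 0 < T + μ := by have := hμ.1; linarith
    unfold gameCost at hNE
    rw [hsum1, hsum2, if_pos hpos1, if_pos hpos2, Function.update_self] at hNE
    simp only [Function.update_self] at hNE
    rw [← EReal.coe_add, ← EReal.coe_add, EReal.coe_le_coe_iff] at hNE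
    simpa [hgdef] using hNE
  -- strict convexity of g
  have hg_sconv : StrictConvexOn ℝ (Icc 0 B) g := by
    rw [hgdef]
    exact hc_sconv.add_convexOn (aux_conv hTpos F hF_mono hF_sconv.convexOn)
  -- part 1 : g lamstar < g 0 by the midpoint trick
  have h0mem : (0 : ℝ) ∈ Icc 0 B := ⟨le_refl 0, hBpos.le⟩
  have hlmem : lamstar ∈ Icc 0 B := ⟨hlamstar_pos.le, hlamstar_lt.le⟩
  have hmid := hg_sconv.2 h0mem hlmem hlamstar_pos.ne (by norm_num) (by norm_num)
    (by norm_num : (1:ℝ)/2 + 1/2 = 1)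
  simp only [smul_eq_mul] at hmid
  have hargeq : (1:ℝ)/2 * (0:ℝ) + (1:ℝ)/2 * lamstar = lamstar / 2 := by ring
  rw [hargeq] at hmid
  have hmid' : g lamstar ≤ g (lamstar / 2) :=
    hkey _ ⟨by linarith, by linarith⟩
  have hstep : g lamstar < g 0 := by linarith
  rw [hgdef] at hstep
  simp only [add_zero, hc0, zero_add] at hstep
  have hT1 : T + lamstar = (s : ℝ) * lamstar := by rw [hT]; ring
  rw [hT1, hT] at hstep
  have hpart1 : c lamstar < F (1 / (((s : ℝ) - 1) * lamstar)) - F (1 / ((s : ℝ) * lamstar)) := by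
    linarith
  refine ⟨hpart1, ?_, ?_⟩
  · -- lamstar < etastar
    by_contra h
    push_neg at h
    rcases eq_or_lt_of_le h with heq | hlt
    · rw [heq] at hetastar; linarith
    · have := aux_diff_mono ((s:ℝ)-1) (s:ℝ) (by linarith) (by linarith) F hF_mono
        hF_sconv.convexOn hetastar_mem.1 hlt
      have hce : c etastar ≤ c lamstar := hc_mono
        ⟨hetastar_mem.1.le, hetastar_mem.2⟩ ⟨hlamstar_pos.le, hlamstar_lt.le⟩ h
      linarith
  · -- variance improvement
    have hle : lamstar < etastar := by
      by_contra h
      push_neg at h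
      rcases eq_or_lt_of_le h with heq | hlt
      · rw [heq] at hetastar; linarith
      · have := aux_diff_mono ((s:ℝ)-1) (s:ℝ) (by linarith) (by linarith) F hF_mono
          hF_sconv.convexOn hetastar_mem.1 hlt
        have hce : c etastar ≤ c lamstar := hc_mono
          ⟨hetastar_mem.1.le, hetastar_mem.2⟩ ⟨hlamstar_pos.le, hlamstar_lt.le⟩ h
        linarith
    have hsp : (0:ℝ) < (s:ℝ) := by linarith
    rw [div_lt_div_iff₀ (mul_pos hsp hetastar_mem.1) (mul_pos hsp hlamstar_pos)]
    nlinarith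
end
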